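/- Suppose A ⊆ (ℤ/2ℤ)^n has cardinality k (sufficiently large) and |A +̂ A| = m. Then the Freiman dimension over ℤ/2ℤ satisfies r_{ℤ/2ℤ}(A) + 1 ≤ 4 m (log k)/k. -/

import Mathlib

/-- The `F`-vector space of Freiman 2-homomorphisms from `A` to `F`. -/
def freimanHoms (F : Type*) [Field F] {G : Type*} [AddCommGroup G] (A : Set G) :
    Submodule F (A → F) where
  carrier := {φ | ∀ a b c d : A, (a : G) + b = (c : G) + d → φ a + φ b = φ c + φ d}
  add_mem' := by
    intro f g hf hg a b c d h
    have h1 := hf a b c d h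
    have h2 := hg a b c d h
    simp only [Pi.add_apply]
    linear_combination h1 + h2
  zero_mem' := by intro a b c d h; simp
  smul_mem' := by
    intro c f hf a b c' d h
    have h1 := hf a b c' d h
    simp only [Pi.smul_apply, smul_eq_mul]
    linear_combination c * h1

/-- The Freiman dimension `r_F(A) = dim Hom₂(A, F) − 1`. -/
noncomputable def freimanDim (F : Type*) [Field F] {G : Type*} [AddCommGroup G]
    (A : Set G) : ℕ :=
  Module.finrank F (freimanHoms F A) - 1

/-- A Freiman 2-homomorphism from `A` (as a subtype) to an abelian group `H`. -/
def IsFreiman2HomOn {G H : Type*} [AddCommGroup G] [AddCommGroup H] (A : Set G)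
    (φ : A → H) : Prop :=
  ∀ a b c d : A, (a : G) + b = (c : G) + d → φ a + φ b = φ c + φ d

/-- The restricted sumset `X +̂ X = {x + y : x, y ∈ X, x ≠ y}`. -/
def hatAdd {G : Type*} [AddCommGroup G] [DecidableEq G] (X : Finset G) : Finset G :=
  ((X ×ˢ X).filter fun p => p.1 ≠ p.2).image fun p => p.1 + p.2

open Finset Module Pointwise

section aux

lemma nat_pow_le_choose_mul_pow : ∀ t d : ℕ, t ≤ d → d ^ t ≤ d.choose t * t ^ t := by
  intro t
  induction t with
  | zero => intro d _; simp
  | succ t ih =>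
    intro d hd
    obtain ⟨e, rfl⟩ : ∃ e, d = e + 1 := ⟨d - 1, by omega⟩
    have hte : t ≤ e := by omega
    have htt : 0 < t ^ t := by
      cases t with
      | zero => simp
      | succ u => exact Nat.pow_pos (Nat.succ_pos u)
    have key : (e + 1) ^ t * t ^ t ≤ e.choose t * (t + 1) ^ t * t ^ t := by
      calc (e + 1) ^ t * t ^ t = ((e + 1) * t) ^ t := by rw [mul_pow]
        _ ≤ (e * (t + 1)) ^ t := Nat.pow_le_pow_left (by nlinarith) t
        _ = e ^ t * (t + 1) ^ t := by rw [mul_pow]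
        _ ≤ (e.choose t * t ^ t) * (t + 1) ^ t := Nat.mul_le_mul_right _ (ih e hte)
        _ = e.choose t * (t + 1) ^ t * t ^ t := by ring
    have key2 : (e + 1) ^ t ≤ e.choose t * (t + 1) ^ t := Nat.le_of_mul_le_mul_right key htt
    have hc : (e + 1).choose (t + 1) * (t + 1) = (e + 1) * e.choose t :=
      (Nat.add_one_mul_choose_eq e t).symm
    calc (e + 1) ^ (t + 1) = (e + 1) * (e + 1) ^ t := by ring
      _ ≤ (e + 1) * (e.choose t * (t + 1) ^ t) := Nat.mul_le_mul_left _ key2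
      _ = ((e + 1) * e.choose t) * (t + 1) ^ t := by ring
      _ = ((e + 1).choose (t + 1) * (t + 1)) * (t + 1) ^ t := by rw [hc]
      _ = (e + 1).choose (t + 1) * (t + 1) ^ (t + 1) := by ring

lemma sum_mem_card_nsmul {M : Type*} [AddCommGroup M] [DecidableEq M] (B S : Finset M)
    (hSB : S ⊆ B) : S.sum id ∈ S.card • B := by
  classical
  induction S using Finset.induction_on with
  | empty => simp [Finset.mem_zero]
  | @insert x S' hx ih =>
    have hS'B : S' ⊆ B := fun y hy => hSB (Finset.mem_insert_of_mem hy)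
    have hxB : x ∈ B := hSB (Finset.mem_insert_self _ _)
    rw [Finset.sum_insert hx, Finset.card_insert_of_notMem hx, succ_nsmul]
    rw [id, add_comm x]
    exact Finset.add_mem_add (ih hS'B) hxB

noncomputable def evF {n : ℕ} (A : Set (Fin n → ZMod 2)) (a : A) :
    Dual (ZMod 2) (freimanHoms (ZMod 2) A) :=
  (LinearMap.proj a).comp (freimanHoms (ZMod 2) A).subtype

lemma evF_apply {n : ℕ} (A : Set (Fin n → ZMod 2)) (a : A)
    (φ : freimanHoms (ZMod 2) A) : evF A a φ = (φ : A → ZMod 2) a := rfl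

lemma evF_freiman {n : ℕ} (A : Set (Fin n → ZMod 2)) (a b c d : A)
    (h : (a : Fin n → ZMod 2) + b = (c : Fin n → ZMod 2) + d) :
    evF A a + evF A b = evF A c + evF A d := by
  ext φ
  simpa only [LinearMap.add_apply, evF_apply] using φ.2 a b c d h

lemma coord_mem_freimanHoms {n : ℕ} (A : Set (Fin n → ZMod 2)) (i : Fin n) :
    (fun a : A => (a : Fin n → ZMod 2) i) ∈ freimanHoms (ZMod 2) A := by
  intro a b c d h
  exact congrFun h i

lemma evF_injective {n : ℕ} (A : Set (Fin n → ZMod 2)) : Function.Injective (evF A) := by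
  intro a b hab
  have h : ∀ i, (a : Fin n → ZMod 2) i = (b : Fin n → ZMod 2) i := by
    intro i
    exact congrArg (fun f => f ⟨_, coord_mem_freimanHoms A i⟩) hab
  exact Subtype.ext (funext h)

lemma evF_span {n : ℕ} (A : Set (Fin n → ZMod 2)) [Fintype A] :
    Submodule.span (ZMod 2) (Set.range (evF A)) = ⊤ := by
  apply Submodule.span_eq_top_of_ne_zero
  rintro z hz
  by_contra hc
  push_neg at hc
  apply hz
  ext a
  simpa only [evF_apply, Submodule.coe_zero, Pi.zero_apply] using hc (evF A a) ⟨a, rfl⟩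


lemma sum_eq_of_subset_linind {M : Type*} [AddCommGroup M] [Module (ZMod 2) M] [DecidableEq M]
    (τ : Finset M) (hind : LinearIndependent (ZMod 2) ((↑) : ↥((τ : Set M)) → M))
    {S₁ S₂ : Finset M} (h1 : S₁ ⊆ τ) (h2 : S₂ ⊆ τ) (hsum : S₁.sum id = S₂.sum id) :
    S₁ = S₂ := by
  classical
  set c : M → ZMod 2 := fun x => (if x ∈ S₁ then 1 else 0) - (if x ∈ S₂ then 1 else 0) with hc
  have hpart : ∀ S : Finset M, S ⊆ τ →
      (∑ x ∈ τ, (if x ∈ S then (1 : ZMod 2) else 0) • x) = S.sum id := by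
    intro S hS
    simp only [ite_smul, one_smul, zero_smul]
    rw [← Finset.sum_filter, Finset.filter_mem_eq_inter, Finset.inter_eq_right.mpr hS]
    rfl
  have hkey : ∑ x ∈ τ, c x • x = 0 := by
    simp only [hc, sub_smul, Finset.sum_sub_distrib]
    rw [hpart S₁ h1, hpart S₂ h2, hsum, sub_self]
  have hczero : ∀ x ∈ τ, c x = 0 := by
    intro x hx
    have hattach : ∑ v ∈ τ.attach, c v.1 • (v : M) = 0 := by
      rw [Finset.sum_attach τ (fun x => c x • x)]
      exact hkey
    exact linearIndependent_iff'.mp hind τ.attach (fun v => c v.1) hattach ⟨x, hx⟩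
      (Finset.mem_attach _ _)
  ext x
  constructor
  · intro hx
    have hcx := hczero x (h1 hx)
    rw [hc] at hcx
    simp only [if_pos hx, sub_eq_zero] at hcx
    by_contra hx2
    rw [if_neg hx2] at hcx
    exact one_ne_zero hcx
  · intro hx
    have hcx := hczero x (h2 hx)
    rw [hc] at hcx
    simp only [if_pos hx, sub_eq_zero] at hcx
    by_contra hx1
    rw [if_neg hx1] at hcx
    exact one_ne_zero hcx.symm

end aux

set_option maxHeartbeats 2000000 in
set_option maxRecDepth 8000 in
/-- If `A ⊆ (ℤ/2ℤ)^n` has sufficiently large cardinality `k` and `|A +̂ A| = m`, then the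
Freiman dimension over `ℤ/2ℤ` satisfies `r_{ℤ/2ℤ}(A) + 1 ≤ 4 m (log k) / k`, where `log`
is the natural logarithm. -/
theorem freimanDim_zmod2_le :
    ∃ k₀ : ℕ, ∀ (n : ℕ) (A : Finset (Fin n → ZMod 2)) (k m : ℕ),
      A.card = k → k₀ ≤ k → (hatAdd A).card = m →
      ((freimanDim (ZMod 2) (A : Set (Fin n → ZMod 2)) : ℝ) + 1) ≤
        4 * (m : ℝ) * Real.log (k : ℝ) / (k : ℝ) := by
  classical
  use 2 ^ 150
  intro n A k m hk hk0 hm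
  subst hk
  subst hm
  set As : Set (Fin n → ZMod 2) := (A : Set (Fin n → ZMod 2)) with hAs
  set d : ℕ := finrank (ZMod 2) (freimanHoms (ZMod 2) As) with hd
  set k : ℕ := A.card with hkdef
  set m : ℕ := (hatAdd A).card with hmdef
  -- basic numerics
  have hk2 : 2 ≤ k := le_trans (by norm_num) hk0
  have hAne : A.Nonempty := Finset.card_pos.mp (by omega)
  obtain ⟨a₀, ha₀⟩ := hAne
  -- m ≥ k - 1
  have hmk : k - 1 ≤ m := by
    have hsub : (A.erase a₀).image (fun b => a₀ + b) ⊆ hatAdd A := by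
      intro x hx
      obtain ⟨b, hb, rfl⟩ := Finset.mem_image.mp hx
      obtain ⟨hba, hbA⟩ := Finset.mem_erase.mp hb
      refine Finset.mem_image.mpr ⟨(a₀, b), ?_, rfl⟩
      exact Finset.mem_filter.mpr ⟨Finset.mem_product.mpr ⟨ha₀, hbA⟩, Ne.symm hba⟩
    have hcard : ((A.erase a₀).image (fun b => a₀ + b)).card = k - 1 := by
      rw [Finset.card_image_of_injective _ (add_right_injective a₀),
        Finset.card_erase_of_mem ha₀]
    calc k - 1 = _ := hcard.symm
      _ ≤ m := Finset.card_le_card hsub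
  -- d ≥ 1
  have hd1 : 1 ≤ d := by
    have honemem : (fun _ : ↥As => (1 : ZMod 2)) ∈ freimanHoms (ZMod 2) As := by
      intro a b c d h; rfl
    have hnt : Nontrivial ↥(freimanHoms (ZMod 2) As) := by
      refine ⟨⟨_, honemem⟩, 0, fun hcontr => ?_⟩
      have h10 : (1 : ZMod 2) = 0 :=
        congrFun (congrArg Subtype.val hcontr) ⟨a₀, Finset.mem_coe.mpr ha₀⟩
      exact one_ne_zero h10
    exact Module.finrank_pos
  -- the image finset B in the dual space
  set B : Finset (Dual (ZMod 2) (freimanHoms (ZMod 2) As)) :=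
    Finset.image (evF As) Finset.univ with hB
  have hBcard : B.card = k := by
    rw [hB, Finset.card_image_of_injective _ (evF_injective As), Finset.card_univ]
    exact Fintype.card_coe A
  have hBne : B.Nonempty := by
    rw [← Finset.card_pos, hBcard]; omega
  -- sumset bounds
  have hhatB : (hatAdd B).card ≤ m := by
    set g : (Fin n → ZMod 2) → Dual (ZMod 2) (freimanHoms (ZMod 2) As) := fun v =>
      if h : ∃ p : ↥As × ↥As, (p.1 : Fin n → ZMod 2) + (p.2 : Fin n → ZMod 2) = v then
        evF As h.choose.1 + evF As h.choose.2 else 0 with hg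
    have hgspec : ∀ a b : ↥As, g ((a : Fin n → ZMod 2) + b) = evF As a + evF As b := by
      intro a b
      have hex : ∃ p : ↥As × ↥As,
          (p.1 : Fin n → ZMod 2) + (p.2 : Fin n → ZMod 2) = (a : Fin n → ZMod 2) + b :=
        ⟨(a, b), rfl⟩
      rw [hg]
      simp only [dif_pos hex]
      exact evF_freiman As _ _ a b hex.choose_spec
    have hsub : hatAdd B ⊆ (hatAdd A).image g := by
      intro x hx
      rw [hatAdd, Finset.mem_image] at hx
      obtain ⟨p, hp, rfl⟩ := hx
      rw [Finset.mem_filter, Finset.mem_product] at hp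
      obtain ⟨⟨hp1, hp2⟩, hpne⟩ := hp
      rw [hB, Finset.mem_image] at hp1 hp2
      obtain ⟨a, -, ha⟩ := hp1
      obtain ⟨b, -, hb⟩ := hp2
      have hab : a ≠ b := by
        intro hcontr
        apply hpne
        rw [← ha, ← hb, hcontr]
      refine Finset.mem_image.mpr ⟨(a : Fin n → ZMod 2) + b, ?_, by rw [hgspec a b, ha, hb]⟩
      refine Finset.mem_image.mpr ⟨((a : Fin n → ZMod 2), (b : Fin n → ZMod 2)), ?_, rfl⟩
      refine Finset.mem_filter.mpr ⟨Finset.mem_product.mpr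
        ⟨Finset.mem_coe.mp a.2, Finset.mem_coe.mp b.2⟩, fun h => hab (Subtype.ext h)⟩
    calc (hatAdd B).card ≤ ((hatAdd A).image g).card := Finset.card_le_card hsub
      _ ≤ (hatAdd A).card := Finset.card_image_le
      _ = m := rfl
  have hBB : (B + B).card ≤ m + 1 := by
    have hsub : B + B ⊆ insert 0 (hatAdd B) := by
      intro x hx
      obtain ⟨p, hp, q, hq, rfl⟩ := Finset.mem_add.mp hx
      by_cases hpq : p = q
      · subst hpq
        have hzero : p + p = 0 := by
          have h2 : p + p = (2 : ZMod 2) • p := (two_smul (ZMod 2) p).symm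
          rw [h2, show (2 : ZMod 2) = 0 from rfl, zero_smul]
        rw [hzero]
        exact Finset.mem_insert_self _ _
      · exact Finset.mem_insert_of_mem (Finset.mem_image.mpr
          ⟨(p, q), Finset.mem_filter.mpr ⟨Finset.mem_product.mpr ⟨hp, hq⟩, hpq⟩, rfl⟩)
    calc (B + B).card ≤ (insert 0 (hatAdd B)).card := Finset.card_le_card hsub
      _ ≤ (hatAdd B).card + 1 := Finset.card_insert_le _ _
      _ ≤ m + 1 := by omega
  -- linearly independent subset τ ⊆ B with card d
  obtain ⟨τ, hτB, hτcard, hτind⟩ :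
      ∃ τ : Finset (Dual (ZMod 2) (freimanHoms (ZMod 2) As)),
        τ ⊆ B ∧ τ.card = d ∧ LinearIndependent (ZMod 2) ((↑) : ↥((τ : Set (Dual (ZMod 2) (freimanHoms (ZMod 2) As)))) → Dual (ZMod 2) (freimanHoms (ZMod 2) As)) := by
    obtain ⟨b, hbB, hbspan, hbind⟩ := exists_linearIndependent (ZMod 2)
      ((B : Set (Dual (ZMod 2) (freimanHoms (ZMod 2) As))))
    have hBrange : (B : Set (Dual (ZMod 2) (freimanHoms (ZMod 2) As)))
        = Set.range (evF As) := by
      rw [hB, Finset.coe_image, Finset.coe_univ, Set.image_univ]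
    have hbfin : b.Finite := B.finite_toSet.subset hbB
    haveI : Fintype b := hbfin.fintype
    have hbtop : Submodule.span (ZMod 2) b = ⊤ := by
      rw [hbspan, hBrange, evF_span As]
    have hcardb : hbfin.toFinset.card = d := by
      have h1 := finrank_span_set_eq_card hbind
      rw [hbtop, finrank_top, Subspace.dual_finrank_eq] at h1
      rw [← hd] at h1
      rw [Set.Finite.card_toFinset]
      simpa using h1.symm
    refine ⟨hbfin.toFinset, ?_, hcardb, ?_⟩
    · intro x hx
      rw [Set.Finite.mem_toFinset] at hx
      exact hbB hx
    · have hcoe : (hbfin.toFinset : Set (Dual (ZMod 2) (freimanHoms (ZMod 2) As))) = b :=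
        hbfin.coe_toFinset
      rw [hcoe]
      exact hbind
  -- the goal reduces to a bound on d
  have hgoal : ((freimanDim (ZMod 2) As : ℝ) + 1) = (d : ℝ) := by
    rw [freimanDim, ← hd]
    have : ((d - 1 : ℕ) : ℝ) = (d : ℝ) - 1 := by
      rw [Nat.cast_sub hd1]; norm_num
    rw [this]; ring
  rw [hgoal]
  -- choose t
  set t : ℕ := ⌈Real.log k⌉₊ with ht
  have hlogk : (103 : ℝ) ≤ Real.log k := by
    have h2150 : ((2 : ℝ)) ^ (150 : ℕ) ≤ (k : ℝ) := by exact_mod_cast hk0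
    have hlog : Real.log ((2 : ℝ) ^ (150 : ℕ)) ≤ Real.log k :=
      Real.log_le_log (by positivity) h2150
    rw [Real.log_pow] at hlog
    have hl2 : (0.6931471803 : ℝ) < Real.log 2 := Real.log_two_gt_d9
    push_cast at hlog
    linarith
  have hkpos : (0 : ℝ) < k := Nat.cast_pos.mpr (by omega)
  have htlog : (t : ℝ) < Real.log k + 1 := by
    exact Nat.ceil_lt_add_one (by linarith)
  have ht1 : 1 ≤ t := by
    rw [ht]
    have : (1:ℝ) ≤ Real.log k := by linarith
    exact_mod_cast Nat.one_le_ceil_iff.mpr (by linarith)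
  have hmR : (k : ℝ) - 1 ≤ (m : ℝ) := by
    have := hmk
    have : ((k - 1 : ℕ) : ℝ) ≤ m := by exact_mod_cast this
    rw [Nat.cast_sub (by omega)] at this
    push_cast at this ⊢
    linarith
  have hm3 : (3 : ℝ) ≤ m := by
    have : (4 : ℝ) ≤ k := by exact_mod_cast le_trans (by norm_num) hk0
    linarith
  have hk2R : (2 : ℝ) ≤ (k : ℝ) := by exact_mod_cast hk2
  by_cases hdt : d ≤ t
  · -- easy case
    rw [le_div_iff₀ hkpos]
    have hdL : (d : ℝ) ≤ Real.log k + 1 := by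
      have hdt' : (d : ℝ) ≤ (t : ℝ) := Nat.cast_le.mpr hdt
      linarith
    nlinarith [mul_le_mul_of_nonneg_right hdL hkpos.le,
      mul_nonneg (sub_nonneg.mpr hk2R) (sub_nonneg.mpr hlogk),
      mul_nonneg (sub_nonneg.mpr hmR) (show (0:ℝ) ≤ Real.log k by linarith)]
  · push_neg at hdt
    have htd : t ≤ d := le_of_lt hdt
    -- counting: choose d t ≤ card (t • B)
    have hcount : d.choose t ≤ (t • B).card := by
      rw [← hτcard, ← Finset.card_powersetCard]
      apply Finset.card_le_card_of_injOn (fun S => S.sum id)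
      · intro S hS
        rw [Finset.mem_coe, Finset.mem_powersetCard] at hS
        obtain ⟨hSτ, hScard⟩ := hS
        have hmem := sum_mem_card_nsmul B S (hSτ.trans hτB)
        rwa [hScard] at hmem
      · intro S₁ h₁ S₂ h₂ hsum
        simp only [Finset.mem_coe, Finset.mem_powersetCard] at h₁ h₂
        exact sum_eq_of_subset_linind τ hτind h₁.1 h₂.1 hsum
    -- Pluennecke
    have hplue : ((t • B).card : ℝ) ≤ ((m : ℝ) + 1) ^ t / (k : ℝ) ^ t * k := by
      have h := Finset.pluennecke_ruzsa_inequality_nsmul_add hBne B t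
      have h' : ((t • B).card : ℝ) ≤ (((B + B).card : ℝ) / ((B.card : ℝ))) ^ t * B.card := by
        have hR := (NNRat.cast_le (K := ℝ)).mpr h
        push_cast at hR
        exact hR
      rw [hBcard] at h'
      have hnum : ((B + B).card : ℝ) ≤ (m : ℝ) + 1 := by exact_mod_cast hBB
      have hdivnn : (0 : ℝ) ≤ ((B + B).card : ℝ) / (k : ℝ) :=
        div_nonneg (Nat.cast_nonneg _) hkpos.le
      have hdivle : ((B + B).card : ℝ) / (k : ℝ) ≤ ((m : ℝ) + 1) / k :=
        (div_le_div_iff_of_pos_right hkpos).mpr hnum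
      calc ((t • B).card : ℝ) ≤ (((B + B).card : ℝ) / (k : ℝ)) ^ t * k := h'
        _ ≤ (((m : ℝ) + 1) / k) ^ t * k :=
            mul_le_mul_of_nonneg_right (pow_le_pow_left₀ hdivnn hdivle t) hkpos.le
        _ = ((m : ℝ) + 1) ^ t / (k : ℝ) ^ t * k := by rw [div_pow]
    -- combine
    have hchain : (d : ℝ) ^ t ≤ (((m : ℝ) + 1) / k * t * Real.exp 1) ^ t := by
      have hA1 : (d : ℝ) ^ t ≤ (d.choose t : ℝ) * (t : ℝ) ^ t := by
        exact_mod_cast nat_pow_le_choose_mul_pow t d htd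
      have hkexp : (k : ℝ) ≤ Real.exp 1 ^ t := by
        have h1 : Real.log k ≤ (t : ℝ) := Nat.le_ceil _
        have h2 : (k : ℝ) = Real.exp (Real.log k) := (Real.exp_log hkpos).symm
        rw [h2, ← Real.exp_nat_mul 1 t]
        apply Real.exp_le_exp.mpr
        rw [mul_one]
        exact h1
      have htnn : (0 : ℝ) ≤ (t : ℝ) ^ t := pow_nonneg (Nat.cast_nonneg t) t
      have hm1nn : (0 : ℝ) ≤ ((m : ℝ) + 1) ^ t / (k : ℝ) ^ t :=
        div_nonneg (pow_nonneg (by linarith [Nat.cast_nonneg (α := ℝ) m]) t)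
          (pow_nonneg hkpos.le t)
      calc (d : ℝ) ^ t ≤ (d.choose t : ℝ) * (t : ℝ) ^ t := hA1
        _ ≤ (((t • B).card : ℕ) : ℝ) * (t : ℝ) ^ t := by
            exact mul_le_mul_of_nonneg_right (Nat.cast_le.mpr hcount) htnn
        _ ≤ (((m : ℝ) + 1) ^ t / (k : ℝ) ^ t * k) * (t : ℝ) ^ t := by
            exact mul_le_mul_of_nonneg_right hplue htnn
        _ ≤ (((m : ℝ) + 1) ^ t / (k : ℝ) ^ t * Real.exp 1 ^ t) * (t : ℝ) ^ t := by
            exact mul_le_mul_of_nonneg_right (mul_le_mul_of_nonneg_left hkexp hm1nn) htnn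
        _ = (((m : ℝ) + 1) / k * t * Real.exp 1) ^ t := by
            rw [mul_pow, mul_pow, div_pow]
            ring
    have hdle : (d : ℝ) ≤ ((m : ℝ) + 1) / k * t * Real.exp 1 := by
      have h1 : (0:ℝ) ≤ (d:ℝ) := Nat.cast_nonneg d
      have h2 : (0:ℝ) ≤ ((m : ℝ) + 1) / k * t * Real.exp 1 := by
        apply mul_nonneg (mul_nonneg (div_nonneg (by linarith [Nat.cast_nonneg (α := ℝ) m]) hkpos.le) (Nat.cast_nonneg t)) (Real.exp_pos 1).le
      exact le_of_pow_le_pow_left₀ (by omega) h2 hchain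
    -- final numerics
    have hexp : Real.exp 1 ≤ 2.7182818286 := Real.exp_one_lt_d9.le
    rw [le_div_iff₀ hkpos]
    have hstep : (d : ℝ) * k ≤ ((m : ℝ) + 1) * t * Real.exp 1 := by
      calc (d : ℝ) * k ≤ (((m : ℝ) + 1) / k * t * Real.exp 1) * k :=
            mul_le_mul_of_nonneg_right hdle hkpos.le
        _ = ((m : ℝ) + 1) * t * Real.exp 1 := by field_simp
    have hm1 : (m : ℝ) + 1 ≤ (4 / 3) * m := by linarith
    have htL : (t : ℝ) ≤ Real.log k + 1 := htlog.le
    have htnn : (0 : ℝ) ≤ (t : ℝ) := Nat.cast_nonneg t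
    have hfin : ((m : ℝ) + 1) * t * Real.exp 1 ≤ 4 * m * Real.log k := by
      have e1 := Real.exp_pos 1
      have hstep2 : ((m : ℝ) + 1) * t ≤ ((4 / 3) * m) * (Real.log k + 1) := by
        apply mul_le_mul hm1 htL htnn (by linarith)
      calc ((m : ℝ) + 1) * t * Real.exp 1 ≤ ((4 / 3) * m) * (Real.log k + 1) * 2.7182818286 := by
            apply mul_le_mul hstep2 hexp e1.le ?_
            apply mul_nonneg (by linarith) (by linarith)
        _ ≤ 4 * m * Real.log k := by
            nlinarith [mul_nonneg (show (0:ℝ) ≤ (m : ℝ) by linarith)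
              (show (0:ℝ) ≤ 4 * Real.log k - (4 / 3) * 2.7182818286 * (Real.log k + 1) by linarith)]
    linarith
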